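/- Suppose Tr_{r/q}(a) = 0 and b ∈ C_j^{(d_2, r)} for some 0 ≤ j ≤ d_2 − 1. Then the Hamming weight of c(a, b) equals (q−1)n_2/q − ((q−1)d_2/(q N_2)) · η_j^{(d_2, r)} (equality after casting the weight into ℂ). -/

import Mathlib

/-- The canonical additive character `ψ(x) = e^{2πi·Tr_{F/F_p}(x)/p}` of a finite field `F`
of characteristic `p`. -/
noncomputable def psi (p : ℕ) (F : Type*) [Field F] [Fintype F] [Algebra (ZMod p) F]
    (x : F) : ℂ :=
  Complex.exp (2 * (Real.pi : ℂ) * Complex.I * ((Algebra.trace (ZMod p) F x).val : ℂ) / (p : ℂ))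

/-- The cyclotomic class `C_i^{(N,r)} = α^i ⟨α^N⟩` in a finite field. -/
def cClass (F : Type*) [Field F] (α : Fˣ) (N i : ℕ) : Set F :=
  {x | ∃ t : ℕ, x = ((α ^ (i + N * t) : Fˣ) : F)}

/-- The Gauss period `η_i^{(N,r)} = Σ_{x ∈ C_i^{(N,r)}} ψ(x)`. -/
noncomputable def gaussPeriod (p : ℕ) (F : Type*) [Field F] [Fintype F] [Algebra (ZMod p) F]
    (α : Fˣ) (N i : ℕ) : ℂ :=
  ∑ t ∈ Finset.range ((Fintype.card F - 1) / N), psi p F ((α ^ (i + N * t) : Fˣ) : F)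


open Finset
set_option linter.unusedSectionVars false
set_option maxHeartbeats 1000000


lemma charK (p s : ℕ) [Fact p.Prime] (hs : 0 < s) (K : Type*) [Field K] [Fintype K]
    (hq : Fintype.card K = p ^ s) : CharP K p := by
  obtain ⟨n, hc, hcard⟩ := FiniteField.card K (ringChar K)
  have hp : p ∣ ringChar K := by
    have : p ∣ p ^ s := dvd_pow_self p hs.ne'
    rw [← hq, hcard] at this
    exact (Fact.out : p.Prime).dvd_of_dvd_pow this
  have : p = ringChar K := ((Nat.prime_dvd_prime_iff_eq (Fact.out) hc).mp hp)
  rw [this]; exact ringChar.charP K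

section Psi
variable (p : ℕ) [Fact p.Prime] (F : Type*) [Field F] [Fintype F] [Algebra (ZMod p) F]

lemma hzeta : IsPrimitiveRoot (Complex.exp (2 * (Real.pi:ℂ) * Complex.I / p)) p :=
  Complex.isPrimitiveRoot_exp p (Fact.out : p.Prime).ne_zero

lemma psi_eq (x : F) :
    psi p F x = Complex.exp (2 * (Real.pi:ℂ) * Complex.I / p) ^ ((Algebra.trace (ZMod p) F) x).val := by
  unfold psi
  rw [← Complex.exp_nat_mul]
  congr 1
  ring

lemma zeta_pow_mod (k : ℕ) :
    Complex.exp (2 * (Real.pi:ℂ) * Complex.I / p) ^ (k % p)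
      = Complex.exp (2 * (Real.pi:ℂ) * Complex.I / p) ^ k := by
  conv_rhs => rw [← Nat.mod_add_div k p]
  rw [pow_add, pow_mul, (hzeta p).pow_eq_one, one_pow, mul_one]

lemma psi_add (x y : F) : psi p F (x + y) = psi p F x * psi p F y := by
  haveI : NeZero p := ⟨(Fact.out : p.Prime).ne_zero⟩
  rw [psi_eq, psi_eq, psi_eq, map_add, ZMod.val_add, zeta_pow_mod, pow_add]

lemma psi_zero : psi p F 0 = 1 := by
  rw [psi_eq, map_zero, ZMod.val_zero, pow_zero]
end Psi

lemma claimC (p s : ℕ) [Fact p.Prime] (hs : 0 < s)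
    (K F : Type*) [Field K] [Fintype K] [DecidableEq K] [Field F] [Fintype F]
    [Algebra (ZMod p) F] [Algebra K F] (hq : Fintype.card K = p ^ s) (x : F) :
    ∑ y : K, psi p F (algebraMap K F y * x)
      = if Algebra.trace K F x = 0 then (Fintype.card K : ℂ) else 0 := by
  classical
  haveI : CharP K p := charK p s hs K hq
  letI : Algebra (ZMod p) K := ZMod.algebra K p
  haveI : IsScalarTower (ZMod p) K F :=
    IsScalarTower.of_algebraMap_eq' (Subsingleton.elim _ _)
  haveI : Module.Finite (ZMod p) K := Module.Finite.of_finite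
  haveI : Module.Finite K F := Module.Finite.of_finite
  have key : ∀ y : K, Algebra.trace (ZMod p) F (algebraMap K F y * x)
      = Algebra.trace (ZMod p) K (y * Algebra.trace K F x) := by
    intro y
    rw [← Algebra.trace_trace (S := K)]
    congr 1
    rw [← Algebra.smul_def, map_smul, smul_eq_mul]
  rcases eq_or_ne (Algebra.trace K F x) 0 with h0 | h0
  · rw [if_pos h0]
    have : ∀ y : K, psi p F (algebraMap K F y * x) = 1 := by
      intro y
      rw [psi_eq, key, h0, mul_zero, map_zero, ZMod.val_zero, pow_zero]
    rw [Finset.sum_congr rfl (fun y _ => this y), Finset.sum_const, Finset.card_univ,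
      nsmul_eq_mul, mul_one]
  · rw [if_neg h0]
    obtain ⟨w, hw⟩ := Algebra.trace_surjective (ZMod p) K 1
    set y₀ : K := w * (Algebra.trace K F x)⁻¹ with hy₀
    have hty : Algebra.trace (ZMod p) K (y₀ * Algebra.trace K F x) = 1 := by
      rw [hy₀, mul_assoc, inv_mul_cancel₀ h0, mul_one, hw]
    set S := ∑ y : K, psi p F (algebraMap K F y * x) with hS
    have hshift : S = S * psi p F (algebraMap K F y₀ * x) := by
      rw [hS, Finset.sum_mul]
      exact Fintype.sum_equiv (Equiv.subRight y₀) _ _ (fun y => by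
        simp only [Equiv.subRight_apply]
        rw [← psi_add, ← add_mul, ← map_add, sub_add_cancel])
    have hz : psi p F (algebraMap K F y₀ * x)
        = Complex.exp (2 * (Real.pi:ℂ) * Complex.I / p) := by
      rw [psi_eq, key, hty, ZMod.val_one, pow_one]
    have hne : psi p F (algebraMap K F y₀ * x) ≠ 1 := by
      rw [hz]
      exact (hzeta p).ne_one (Fact.out : p.Prime).one_lt
    have := hshift
    have h1 : S * (1 - psi p F (algebraMap K F y₀ * x)) = 0 := by
      rw [mul_sub, mul_one, ← hshift, sub_self]
    rcases mul_eq_zero.mp h1 with h | h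
    · exact h
    · exact absurd (by linear_combination -h) hne


section Fiber
variable (n n₂ q' A₁ A₂ : ℕ) [NeZero n]

/-- helper: cast invariance mod a period -/
lemma cast_mul_mod (A B c : ℕ) (h : n ∣ A * B) :
    ((A * (c % B) : ℕ) : ZMod n) = ((A * c : ℕ) : ZMod n) := by
  conv_rhs => rw [← Nat.mod_add_div c B]
  push_cast
  have h0 : ((A : ZMod n) * (B : ZMod n)) = 0 := by
    have := (ZMod.natCast_eq_zero_iff (A * B) n).mpr h
    push_cast at this
    exact this
  linear_combination (-((c / B : ℕ) : ZMod n)) * h0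
end Fiber

set_option linter.unusedSectionVars false

section Fiber2
variable (n n₂ q' A₁ A₂ : ℕ) [NeZero n]

lemma bezout (hg : Nat.gcd (Nat.gcd A₁ A₂) n = 1) :
    ∃ X Y : ℤ, (A₁ : ZMod n) * (X : ZMod n) + (A₂ : ZMod n) * (Y : ZMod n) = 1 := by
  set G := Nat.gcd A₁ A₂ with hGdef
  have hG := Nat.gcd_eq_gcd_ab G n
  have hG2 := Nat.gcd_eq_gcd_ab A₁ A₂
  rw [hg] at hG
  rw [← hGdef] at hG2
  rw [hG2] at hG
  refine ⟨Nat.gcdA A₁ A₂ * Nat.gcdA G n, Nat.gcdB A₁ A₂ * Nat.gcdA G n, ?_⟩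
  have h3 := congrArg (fun z : ℤ => (z : ZMod n)) hG
  push_cast at h3 ⊢
  rw [ZMod.natCast_self] at h3
  linear_combination -h3

lemma Esurj (hn₂ : 0 < n₂) (hq' : 0 < q') (hA1 : n ∣ A₁ * q') (hA2 : n ∣ A₂ * n₂)
    (hg : Nat.gcd (Nat.gcd A₁ A₂) n = 1) (c : ZMod n) :
    ∃ y ∈ Finset.range n₂ ×ˢ Finset.range q',
      ((A₁ * y.2 + A₂ * y.1 : ℕ) : ZMod n) = c := by
  obtain ⟨X, Y, hbez⟩ := bezout n A₁ A₂ hg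
  set t₀ : ℕ := (((c.val : ℤ) * Y) % (n₂:ℤ)).toNat with ht₀
  set k₀ : ℕ := ((((c.val : ℤ) * X) % (q':ℤ)).toNat) with hk₀
  have hn₂' : (0:ℤ) < n₂ := by exact_mod_cast hn₂
  have hq'' : (0:ℤ) < q' := by exact_mod_cast hq'
  have hmem : (t₀, k₀) ∈ Finset.range n₂ ×ˢ Finset.range q' := by
    rw [Finset.mem_product, Finset.mem_range, Finset.mem_range]
    constructor
    · have h1 := Int.emod_lt_of_pos ((c.val : ℤ) * Y) hn₂'
      have h2 := Int.emod_nonneg ((c.val : ℤ) * Y) hn₂'.ne'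
      omega
    · have h1 := Int.emod_lt_of_pos ((c.val : ℤ) * X) hq''
      have h2 := Int.emod_nonneg ((c.val : ℤ) * X) hq''.ne'
      omega
  refine ⟨(t₀, k₀), hmem, ?_⟩
  have hkZ : ((k₀ : ℕ) : ℤ) = ((c.val : ℤ) * X) % q' :=
    Int.toNat_of_nonneg (Int.emod_nonneg _ hq''.ne')
  have htZ : ((t₀ : ℕ) : ℤ) = ((c.val : ℤ) * Y) % n₂ :=
    Int.toNat_of_nonneg (Int.emod_nonneg _ hn₂'.ne')
  have hA1' : (A₁ : ZMod n) * (q' : ZMod n) = 0 := by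
    have := (ZMod.natCast_eq_zero_iff (A₁ * q') n).mpr hA1
    push_cast at this; exact this
  have hA2' : (A₂ : ZMod n) * (n₂ : ZMod n) = 0 := by
    have := (ZMod.natCast_eq_zero_iff (A₂ * n₂) n).mpr hA2
    push_cast at this; exact this
  have hkmod : (A₁ : ZMod n) * ((k₀ : ℕ) : ZMod n)
      = (A₁ : ZMod n) * ((c.val : ℕ) : ZMod n) * ((X : ℤ) : ZMod n) := by
    have h := congrArg (fun z : ℤ => (z : ZMod n)) hkZ
    rw [Int.emod_def ((c.val : ℤ) * X) (q' : ℤ)] at h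
    push_cast at h
    rw [h]
    linear_combination (-((((c.val:ℤ) * X) / (q':ℤ) : ℤ) : ZMod n)) * hA1'
  have htmod : (A₂ : ZMod n) * ((t₀ : ℕ) : ZMod n)
      = (A₂ : ZMod n) * ((c.val : ℕ) : ZMod n) * ((Y : ℤ) : ZMod n) := by
    have h := congrArg (fun z : ℤ => (z : ZMod n)) htZ
    rw [Int.emod_def ((c.val : ℤ) * Y) (n₂ : ℤ)] at h
    push_cast at h
    rw [h]
    linear_combination (-((((c.val:ℤ) * Y) / (n₂:ℤ) : ℤ) : ZMod n)) * hA2'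
  have hcv : ((c.val : ℕ) : ZMod n) = c := by
    simp [ZMod.natCast_val, ZMod.cast_id]
  push_cast
  rw [hkmod, htmod]
  linear_combination ((c.val : ℕ) : ZMod n) * hbez + hcv
end Fiber2

section Fiber3
variable (n n₂ q' A₁ A₂ : ℕ) [NeZero n]

lemma fiberSum (hn₂ : 0 < n₂) (hq' : 0 < q') (hA1 : n ∣ A₁ * q') (hA2 : n ∣ A₂ * n₂)
    (hg : Nat.gcd (Nat.gcd A₁ A₂) n = 1) :
    ∃ κ : ℕ, κ * n = n₂ * q' ∧
      ∀ f : ZMod n → ℂ,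
        ∑ z ∈ Finset.range n₂ ×ˢ Finset.range q',
            f ((A₁ * z.2 + A₂ * z.1 : ℕ) : ZMod n)
          = (κ : ℂ) * ∑ w : ZMod n, f w := by
  classical
  set s := Finset.range n₂ ×ˢ Finset.range q' with hs
  set E : ℕ × ℕ → ZMod n := fun z => ((A₁ * z.2 + A₂ * z.1 : ℕ) : ZMod n) with hE
  have hEmod : ∀ t k : ℕ, E (t % n₂, k % q') = E (t, k) := by
    intro t k
    have h1 := cast_mul_mod n A₁ q' k hA1
    have h2 := cast_mul_mod n A₂ n₂ t hA2
    simp only [hE]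
    push_cast at h1 h2 ⊢
    linear_combination h1 + h2
  have hEadd : ∀ y z : ℕ × ℕ, E ((z.1 + y.1) % n₂, (z.2 + y.2) % q') = E z + E y := by
    intro y z
    rw [hEmod]
    simp only [hE]
    push_cast
    ring
  set σ : ℕ × ℕ → ℕ × ℕ → ℕ × ℕ := fun y z => ((z.1 + y.1) % n₂, (z.2 + y.2) % q') with hσ
  have hσs : ∀ y z, σ y z ∈ s := by
    intro y z
    simp only [hσ, hs, Finset.mem_product, Finset.mem_range]
    exact ⟨Nat.mod_lt _ hn₂, Nat.mod_lt _ hq'⟩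
  have hσinj : ∀ y, Set.InjOn (σ y) s := by
    intro y z hz z' hz' h
    simp only [hs, Finset.coe_product, Set.mem_prod, Finset.mem_coe, Finset.mem_range] at hz hz'
    simp only [hσ, Prod.mk.injEq] at h
    have h1 : z.1 % n₂ = z'.1 % n₂ := Nat.ModEq.add_right_cancel' y.1 h.1
    have h2 : z.2 % q' = z'.2 % q' := Nat.ModEq.add_right_cancel' y.2 h.2
    rw [Nat.mod_eq_of_lt hz.1, Nat.mod_eq_of_lt hz'.1] at h1
    rw [Nat.mod_eq_of_lt hz.2, Nat.mod_eq_of_lt hz'.2] at h2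
    exact Prod.ext h1 h2
  have hle : ∀ (w : ZMod n) (y : ℕ × ℕ),
      (s.filter (fun z => E z = w)).card ≤ (s.filter (fun z => E z = w + E y)).card := by
    intro w y
    apply Finset.card_le_card_of_injOn (σ y)
    · intro z hz
      rw [Finset.mem_coe, Finset.mem_filter] at hz ⊢
      exact ⟨hσs y z, by rw [show σ y z = ((z.1+y.1)%n₂, (z.2+y.2)%q') from rfl, hEadd, hz.2]⟩
    · exact (hσinj y).mono (fun z hz => (Finset.mem_filter.mp hz).1)
  have hfib : ∀ w w' : ZMod n,
      (s.filter (fun z => E z = w)).card = (s.filter (fun z => E z = w')).card := by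
    intro w w'
    obtain ⟨y, hy, hEy⟩ := Esurj n n₂ q' A₁ A₂ hn₂ hq' hA1 hA2 hg (w' - w)
    obtain ⟨y', hy', hEy'⟩ := Esurj n n₂ q' A₁ A₂ hn₂ hq' hA1 hA2 hg (w - w')
    apply le_antisymm
    · have h := hle w y
      rw [show E y = w' - w from hEy, show w + (w' - w) = w' by ring] at h
      exact h
    · have h := hle w' y'
      rw [show E y' = w - w' from hEy', show w' + (w - w') = w by ring] at h
      exact h
  set κ := (s.filter (fun z => E z = 0)).card with hκ
  have hcount : κ * n = n₂ * q' := by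
    have h1 : ∑ w : ZMod n, (s.filter (fun z => E z = w)).card = s.card := by
      have h0 := Finset.sum_fiberwise s E (fun _ => (1:ℕ))
      simpa using h0
    rw [Finset.sum_congr rfl (fun w _ => hfib w 0)] at h1
    rw [Finset.sum_const, Finset.card_univ] at h1
    rw [hs, Finset.card_product, Finset.card_range, Finset.card_range] at h1
    rw [ZMod.card] at h1
    rw [hκ, mul_comm]
    simpa using h1
  refine ⟨κ, hcount, fun f => ?_⟩
  rw [← Finset.sum_fiberwise s E (fun z => f (E z))]
  have : ∀ w : ZMod n, ∑ z ∈ s.filter (fun z => E z = w), f (E z) = (κ : ℂ) * f w := by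
    intro w
    rw [Finset.sum_congr rfl (fun z hz => by rw [(Finset.mem_filter.mp hz).2])]
    rw [Finset.sum_const, nsmul_eq_mul, hfib w 0, ← hκ]
  rw [Finset.sum_congr rfl (fun w _ => this w), Finset.mul_sum]
end Fiber3


lemma unitsReindex (K F : Type*) [Field K] [Fintype K] [DecidableEq K] [Field F] [Fintype F] [Algebra K F]
    (α : Fˣ) (hα : ∀ x : Fˣ, x ∈ Subgroup.zpowers α) (N₀ : ℕ)
    (hN₀u : N₀ * (Fintype.card K - 1) = Fintype.card F - 1) (h : Fˣ → ℂ) :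
    ∑ y : Kˣ, h (Units.map (algebraMap K F).toMonoidHom y)
      = ∑ k ∈ Finset.range (Fintype.card K - 1), h (α ^ (N₀ * k)) := by
  classical
  set q1 := Fintype.card K - 1 with hq1def
  set u := Fintype.card F - 1 with hudef
  have hKcard : 1 < Fintype.card K := Fintype.one_lt_card
  have hFcard : 1 < Fintype.card F := Fintype.one_lt_card
  have hq1 : 0 < q1 := by omega
  have hu0 : 0 < u := by omega
  have hN₀pos : 0 < N₀ := by
    rcases Nat.eq_zero_or_pos N₀ with h0 | h0
    · rw [h0, zero_mul] at hN₀u; omega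
    · exact h0
  have horder : orderOf α = u := by
    have := orderOf_eq_card_of_forall_mem_zpowers hα
    rwa [Nat.card_eq_fintype_card, Fintype.card_units] at this
  set ι : Kˣ →* Fˣ := Units.map (algebraMap K F).toMonoidHom with hι
  have hιinj : Function.Injective ι := Units.map_injective (algebraMap K F).injective
  -- injectivity of the power map on range q1
  have hpowinj : ∀ x ∈ Finset.range q1, ∀ y ∈ Finset.range q1,
      α ^ (N₀ * x) = α ^ (N₀ * y) → x = y := by
    intro x hx y hy hxy
    rw [Finset.mem_range] at hx hy
    rw [pow_eq_pow_iff_modEq, horder] at hxy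
    have h1 : N₀ * x % (N₀ * q1) = N₀ * y % (N₀ * q1) := by rw [hN₀u]; exact hxy
    rw [Nat.mul_mod_mul_left, Nat.mul_mod_mul_left] at h1
    have := Nat.eq_of_mul_eq_mul_left hN₀pos h1
    rwa [Nat.mod_eq_of_lt hx, Nat.mod_eq_of_lt hy] at this
  -- image of units is contained inside the power image
  have hsub : (Finset.univ.image ι) ⊆ (Finset.range q1).image (fun k => α ^ (N₀ * k)) := by
    intro x hx
    rw [Finset.mem_image] at hx
    obtain ⟨y, _, rfl⟩ := hx
    have hz := hα (ι y)
    rw [← mem_powers_iff_mem_zpowers] at hz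
    obtain ⟨k, hk0⟩ := hz
    have hk : α ^ k = ι y := hk0
    have h1 : (α ^ k) ^ q1 = 1 := by
      rw [hk, ← map_pow]
      have : y ^ q1 = 1 := by
        rw [hq1def, ← Fintype.card_units]
        exact pow_card_eq_one
      rw [this, map_one]
    rw [← pow_mul, ← pow_zero α, pow_eq_pow_iff_modEq, horder] at h1
    have h2 : u ∣ k * q1 := (Nat.modEq_zero_iff_dvd.mp h1)
    rw [← hN₀u] at h2
    have h3 : N₀ ∣ k := by
      have := (Nat.mul_dvd_mul_iff_right hq1).mp h2
      exact this
    obtain ⟨k', rfl⟩ := h3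
    rw [Finset.mem_image]
    refine ⟨k' % q1, Finset.mem_range.mpr (Nat.mod_lt _ hq1), ?_⟩
    rw [← hk]
    rw [pow_eq_pow_iff_modEq, horder, ← hN₀u]
    exact Nat.ModEq.mul_left' N₀ (Nat.mod_modEq k' q1)
  have hcard1 : (Finset.univ.image ι).card = q1 := by
    rw [Finset.card_image_of_injective _ hιinj, Finset.card_univ, Fintype.card_units]
  have hcard2 : ((Finset.range q1).image (fun k => α ^ (N₀ * k))).card = q1 := by
    rw [Finset.card_image_of_injOn hpowinj, Finset.card_range]
  have heq : (Finset.range q1).image (fun k => α ^ (N₀ * k)) = Finset.univ.image ι :=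
    (Finset.eq_of_subset_of_card_le hsub (by rw [hcard1, hcard2])).symm
  rw [← Finset.sum_image (f := h) (g := ⇑ι) (s := Finset.univ) (fun x _ y _ hxy => hιinj hxy),
    ← heq, Finset.sum_image hpowinj]

lemma sum_K_split (K : Type*) [Field K] [Fintype K] [DecidableEq K] (g : K → ℂ) :
    ∑ y : K, g y = g 0 + ∑ y : Kˣ, g y := by
  classical
  rw [← Finset.sum_erase_add Finset.univ g (Finset.mem_univ 0), add_comm]
  congr 1
  refine (Finset.sum_nbij' (fun y : Kˣ => (y : K))
    (fun x => if h : x = 0 then 1 else Units.mk0 x h) ?_ ?_ ?_ ?_ ?_).symm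
  · intro y _
    exact Finset.mem_erase.mpr ⟨y.ne_zero, Finset.mem_univ _⟩
  · intro x _; exact Finset.mem_univ _
  · intro y _
    simp only [dif_neg y.ne_zero]
    exact Units.ext rfl
  · intro x hx
    rw [dif_neg (Finset.mem_erase.mp hx).1]
    rfl
  · intro y _; rfl

/-- if `Tr_{r/q}(a) = 0` and `b ∈ C_j^{(d₂,r)}`, the weight of `c(a,b)` is
`(q-1)n₂/q - ((q-1)d₂/(qN₂))·η_j^{(d₂,r)}`. -/
theorem stmt9 (p s m : ℕ) [Fact p.Prime] (hs : 0 < s) (hm : 0 < m)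
    (K F : Type*) [Field K] [Fintype K] [DecidableEq K] [Field F] [Fintype F]
    [Algebra (ZMod p) F] [Algebra K F]
    (hq : Fintype.card K = p ^ s) (hr : Fintype.card F = Fintype.card K ^ m)
    (α : Fˣ) (hα : ∀ x : Fˣ, x ∈ Subgroup.zpowers α)
    (g₂ : Fˣ) (n₂ : ℕ) (h₂ : orderOf g₂ = n₂)
    (N₀ N₂ d₂ : ℕ)
    (hN₀ : N₀ = (Fintype.card F - 1) / (Fintype.card K - 1))
    (hN₂ : N₂ = (Fintype.card F - 1) / n₂)
    (hd₂ : d₂ = Nat.gcd N₀ N₂)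
    (a b : F) (j : ℕ) (hj : j < d₂)
    (ha : Algebra.trace K F a = 0) (hb : b ∈ cClass F α d₂ j) :
    (hammingNorm (fun t : Fin n₂ =>
        Algebra.trace K F (a + b * (g₂ : F) ^ (t : ℕ))) : ℂ)
      = ((Fintype.card K : ℂ) - 1) * (n₂ : ℂ) / (Fintype.card K : ℂ)
        - ((Fintype.card K : ℂ) - 1) * (d₂ : ℂ)
            / ((Fintype.card K : ℂ) * (N₂ : ℂ)) * gaussPeriod p F α d₂ j := by
  classical
  obtain ⟨t₀, hb⟩ := hb
  have hKcard : 1 < Fintype.card K := Fintype.one_lt_card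
  have hFcard : 1 < Fintype.card F := Fintype.one_lt_card
  set q := Fintype.card K with hqdef
  set u := Fintype.card F - 1 with hudef
  have hq1 : 0 < q - 1 := by omega
  have hu0 : 0 < u := by
    have : 1 < Fintype.card F := hFcard
    omega
  have horder : orderOf α = u := by
    have := orderOf_eq_card_of_forall_mem_zpowers hα
    rwa [Nat.card_eq_fintype_card, Fintype.card_units] at this
  have hn₂pos : 0 < n₂ := h₂ ▸ orderOf_pos g₂
  have hn₂dvd : n₂ ∣ u := by
    rw [← h₂]
    have := orderOf_dvd_card (G := Fˣ) (x := g₂)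
    rwa [Fintype.card_units] at this
  have hN₂n₂ : N₂ * n₂ = u := by rw [hN₂]; exact Nat.div_mul_cancel hn₂dvd
  have hq1dvd : (q - 1) ∣ u := by
    have h := Nat.sub_dvd_pow_sub_pow q 1 m
    rw [one_pow, ← hr] at h
    exact h
  have hN₀q : N₀ * (q - 1) = u := by rw [hN₀]; exact Nat.div_mul_cancel hq1dvd
  have hN₀pos : 0 < N₀ := by
    rcases Nat.eq_zero_or_pos N₀ with h0 | h0
    · rw [h0, zero_mul] at hN₀q; omega
    · exact h0
  have hN₂pos : 0 < N₂ := by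
    rcases Nat.eq_zero_or_pos N₂ with h0 | h0
    · rw [h0, zero_mul] at hN₂n₂; omega
    · exact h0
  have hd₂pos : 0 < d₂ := by omega
  have hd₂N₀ : d₂ ∣ N₀ := hd₂ ▸ Nat.gcd_dvd_left _ _
  have hd₂N₂ : d₂ ∣ N₂ := hd₂ ▸ Nat.gcd_dvd_right _ _
  have hd₂u : d₂ ∣ u := hd₂N₂.trans ⟨n₂, hN₂n₂.symm⟩
  set n := u / d₂ with hndef
  have hnd : d₂ * n = u := Nat.mul_div_cancel' hd₂u
  have hnpos : 0 < n := by
    rcases Nat.eq_zero_or_pos n with h0 | h0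
    · rw [h0, mul_zero] at hnd; omega
    · exact h0
  haveI : NeZero n := ⟨hnpos.ne'⟩
  -- g₂ as a power of α
  obtain ⟨v, hv0⟩ := (mem_powers_iff_mem_zpowers).mpr (hα g₂)
  have hv : α ^ v = g₂ := hv0
  have hgcduv : Nat.gcd u v = N₂ := by
    have h1 : orderOf (α ^ v) = u / Nat.gcd u v := by rw [orderOf_pow, horder]
    rw [hv, h₂] at h1
    have h2 : Nat.gcd u v ∣ u := Nat.gcd_dvd_left u v
    have h3 : Nat.gcd u v * n₂ = u := by rw [h1]; exact Nat.mul_div_cancel' h2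
    exact Nat.eq_of_mul_eq_mul_right hn₂pos (by rw [h3, hN₂n₂])
  have hN₂v : N₂ ∣ v := hgcduv ▸ Nat.gcd_dvd_right u v
  have hd₂v : d₂ ∣ v := hd₂N₂.trans hN₂v
  set A₁ := N₀ / d₂ with hA₁def
  set A₂ := v / d₂ with hA₂def
  have hA₁d : d₂ * A₁ = N₀ := Nat.mul_div_cancel' hd₂N₀
  have hA₂d : d₂ * A₂ = v := Nat.mul_div_cancel' hd₂v
  have hA1eq : A₁ * (q - 1) = n := by
    apply Nat.eq_of_mul_eq_mul_left hd₂pos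
    rw [← mul_assoc, hA₁d, hN₀q, hnd]
  have hA1 : n ∣ A₁ * (q - 1) := by rw [hA1eq]
  have hA2 : n ∣ A₂ * n₂ := by
    have h1 : u ∣ v * n₂ := by
      obtain ⟨w, hw⟩ := hN₂v
      exact ⟨w, by rw [hw, ← hN₂n₂]; ring⟩
    have h2 : d₂ * n ∣ d₂ * (A₂ * n₂) := by rw [← mul_assoc, hA₂d, hnd]; exact h1
    exact (Nat.mul_dvd_mul_iff_left hd₂pos).mp h2
  have hgcd1 : Nat.gcd (Nat.gcd A₁ A₂) n = 1 := by
    apply Nat.eq_of_mul_eq_mul_left hd₂pos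
    rw [mul_one, ← Nat.gcd_mul_left, ← Nat.gcd_mul_left, hA₁d, hA₂d, hnd,
      Nat.gcd_assoc, Nat.gcd_comm v u, hgcduv, ← hd₂]
  -- exponent congruence helper
  have hαcongr : ∀ M M' : ℕ, M ≡ M' [MOD u] → α ^ M = α ^ M' := by
    intro M M' hMM
    rw [pow_eq_pow_iff_modEq, horder]
    exact hMM
  -- the function on ZMod n
  set ft : ZMod n → ℂ := fun w => psi p F (b * ((α ^ (d₂ * w.val) : Fˣ) : F)) with hftdef
  have hft : ∀ M : ℕ, ft ((M : ℕ) : ZMod n) = psi p F (b * ((α ^ (d₂ * M) : Fˣ) : F)) := by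
    intro M
    simp only [hftdef, ZMod.val_natCast]
    have hₐ : α ^ (d₂ * (M % n)) = α ^ (d₂ * M) :=
      hαcongr _ _ (by rw [← hnd]; exact Nat.ModEq.mul_left' d₂ (Nat.mod_modEq M n))
    rw [hₐ]
  -- Gauss period identification
  have hgauss : ∑ w : ZMod n, ft w = gaussPeriod p F α d₂ j := by
    set G : ZMod n → ℂ := fun w => psi p F ((α ^ (j + d₂ * w.val) : Fˣ) : F) with hGdef
    have hfG : ∀ w : ZMod n, ft w = G (w + (t₀ : ZMod n)) := by
      intro w
      simp only [hftdef, hGdef]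
      rw [hb, ← Units.val_mul, ← pow_add]
      congr 2
      apply hαcongr
      rw [ZMod.val_add, ZMod.val_natCast, ← hnd]
      have h1 : (w.val + t₀ % n) % n ≡ w.val + t₀ [MOD n] :=
        (Nat.mod_modEq _ n).trans ((Nat.mod_modEq t₀ n).add_left w.val)
      have h2 := (h1.mul_left' d₂).add_left j
      have : j + d₂ * t₀ + d₂ * w.val = j + d₂ * (w.val + t₀) := by ring
      rw [this]
      exact h2.symm
    rw [Fintype.sum_equiv (Equiv.addRight ((t₀ : ℕ) : ZMod n)) ft G hfG]
    have hrange : ∑ w : ZMod n, G w = ∑ l ∈ Finset.range n, psi p F ((α ^ (j + d₂ * l) : Fˣ) : F) := by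
      refine Finset.sum_nbij' (fun w : ZMod n => w.val) (fun l : ℕ => (l : ZMod n)) ?_ ?_ ?_ ?_ ?_
      · intro w _; exact Finset.mem_range.mpr (ZMod.val_lt w)
      · intro l _; exact Finset.mem_univ _
      · intro w _; exact ZMod.natCast_rightInverse w
      · intro l hl; exact ZMod.val_cast_of_lt (Finset.mem_range.mp hl)
      · intro w _; rfl
    rw [hrange]
    rw [gaussPeriod]
  -- trace reduction and hamming weight
  set Z : ℂ := ∑ t ∈ Finset.range n₂,
      (if Algebra.trace K F (b * (g₂ : F) ^ t) = 0 then (1:ℂ) else 0) with hZdef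
  have hW : ((hammingNorm (fun t : Fin n₂ =>
      Algebra.trace K F (a + b * (g₂ : F) ^ (t : ℕ)))) : ℂ) = (n₂ : ℂ) - Z := by
    rw [hammingNorm, Finset.card_filter]
    push_cast
    rw [Fin.sum_univ_eq_sum_range
      (fun l => if Algebra.trace K F (a + b * (g₂ : F) ^ l) ≠ 0 then (1:ℂ) else 0) n₂]
    have hstep : ∀ t ∈ Finset.range n₂,
        (if Algebra.trace K F (a + b * (g₂ : F) ^ t) ≠ 0 then (1:ℂ) else 0)
          = 1 - (if Algebra.trace K F (b * (g₂ : F) ^ t) = 0 then (1:ℂ) else 0) := by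
      intro t _
      rw [map_add, ha, zero_add]
      by_cases h : Algebra.trace K F (b * (g₂:F) ^ t) = 0
      · simp [h]
      · simp [h]
    rw [Finset.sum_congr rfl hstep, Finset.sum_sub_distrib, Finset.sum_const,
      Finset.card_range, nsmul_eq_mul, mul_one, hZdef]
  -- the fiber counting
  obtain ⟨κ, hκn, hκsum⟩ := fiberSum n n₂ (q-1) A₁ A₂ hn₂pos hq1 hA1 hA2 hgcd1
  have hZq : (q : ℂ) * Z = (n₂ : ℂ) + (κ : ℂ) * gaussPeriod p F α d₂ j := by
    rw [hZdef, Finset.mul_sum]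
    have hstep1 : ∀ t ∈ Finset.range n₂,
        (q:ℂ) * (if Algebra.trace K F (b * (g₂:F)^t) = 0 then (1:ℂ) else 0)
        = 1 + ∑ y : Kˣ, psi p F
            (((Units.map (algebraMap K F).toMonoidHom y : Fˣ) : F) * (b * (g₂:F)^t)) := by
      intro t _
      have h1 := claimC p s hs K F hq (b * (g₂:F)^t)
      rw [mul_ite, mul_one, mul_zero, ← h1]
      rw [sum_K_split K (fun y => psi p F (algebraMap K F y * (b * (g₂:F)^t)))]
      rw [map_zero, zero_mul, psi_zero]
      rfl
    rw [Finset.sum_congr rfl hstep1, Finset.sum_add_distrib, Finset.sum_const,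
      Finset.card_range, nsmul_eq_mul, mul_one]
    congr 1
    have hstep2 : ∀ t ∈ Finset.range n₂,
        ∑ y : Kˣ, psi p F (((Units.map (algebraMap K F).toMonoidHom y : Fˣ) : F) * (b * (g₂:F)^t))
        = ∑ k ∈ Finset.range (q-1), psi p F (((α ^ (N₀ * k) : Fˣ):F) * (b * (g₂:F)^t)) :=
      fun t _ => unitsReindex K F α hα N₀ hN₀q (fun w => psi p F ((w : F) * (b * (g₂:F)^t)))
    rw [Finset.sum_congr rfl hstep2]
    have hprod : ∑ t ∈ Finset.range n₂, ∑ k ∈ Finset.range (q-1),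
          psi p F (((α ^ (N₀ * k) : Fˣ):F) * (b * (g₂:F)^t))
        = ∑ z ∈ Finset.range n₂ ×ˢ Finset.range (q-1),
          psi p F (((α ^ (N₀ * z.2) : Fˣ):F) * (b * (g₂:F)^z.1)) := by
      rw [Finset.sum_product]
    rw [hprod]
    have hpoint : ∀ z ∈ Finset.range n₂ ×ˢ Finset.range (q-1),
        psi p F (((α ^ (N₀ * z.2) : Fˣ):F) * (b * (g₂:F)^z.1))
          = ft ((A₁ * z.2 + A₂ * z.1 : ℕ) : ZMod n) := by
      intro z _
      rw [hft]
      congr 1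
      have he : d₂ * (A₁ * z.2 + A₂ * z.1) = N₀ * z.2 + v * z.1 := by
        rw [Nat.mul_add, ← mul_assoc, ← mul_assoc, hA₁d, hA₂d]
      rw [he, pow_add, show α ^ (v * z.1) = (α ^ v) ^ z.1 from pow_mul α v z.1, hv,
        Units.val_mul]
      have : ((g₂ ^ z.1 : Fˣ) : F) = (g₂ : F) ^ z.1 := Units.val_pow_eq_pow_val g₂ z.1
      rw [this]
      ring
    rw [Finset.sum_congr rfl hpoint, hκsum, hgauss]
  -- final algebra
  rw [hW]
  have hκN₂ : κ * N₂ = d₂ * (q - 1) := by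
    apply Nat.eq_of_mul_eq_mul_right hn₂pos
    calc κ * N₂ * n₂ = κ * (N₂ * n₂) := by ring
    _ = κ * (d₂ * n) := by rw [hN₂n₂, ← hnd]
    _ = d₂ * (κ * n) := by ring
    _ = d₂ * (n₂ * (q-1)) := by rw [hκn]
    _ = d₂ * (q-1) * n₂ := by ring
  have hq0 : (q:ℂ) ≠ 0 := Nat.cast_ne_zero.mpr (by omega)
  have hN₂0 : (N₂:ℂ) ≠ 0 := Nat.cast_ne_zero.mpr hN₂pos.ne'
  have hZval : Z = ((n₂:ℂ) + (κ:ℂ) * gaussPeriod p F α d₂ j) / (q:ℂ) := by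
    rw [eq_div_iff hq0, mul_comm]
    exact hZq
  rw [hZval]
  have hκN₂' : (κ:ℂ) * (N₂:ℂ) = (d₂:ℂ) * ((q:ℂ) - 1) := by
    have := congrArg (fun x : ℕ => (x : ℂ)) hκN₂
    push_cast [Nat.cast_sub (by omega : 1 ≤ q)] at this
    exact this
  field_simp
  linear_combination (-gaussPeriod p F α d₂ j) * hκN₂'
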